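/- Let Ã^co be the (K+1)×K matrix stacking A^co = R^{1/2}(I_K − 1_K r')Σ^co and the row 1_K', with Σ^co symmetric positive definite, r positive with entries summing to 1, R = diag(r), and let r̲ = min_k r_k. Then the smallest eigenvalue φ_A of Ã^co' Ã^co satisfies φ_A^{-1} ≤ 2 r̲^{-1} φ_min^{-2}(Σ^co) + K^{-1} φ_max(Σ^co)/φ_min(Σ^co). -/

import Mathlib

open scoped BigOperators
open Matrix

lemma dot_spectral {n : Type*} [Fintype n] [DecidableEq n]
    (A : Matrix n n ℝ) (hA : A.IsHermitian) (x : n → ℝ) :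
    ∃ z : n → ℝ, x ⬝ᵥ (A *ᵥ x) = ∑ i, hA.eigenvalues i * (z i)^2 ∧ x ⬝ᵥ x = ∑ i, (z i)^2 := by
  set U : Matrix n n ℝ := (hA.eigenvectorUnitary : Matrix n n ℝ) with hU
  have hstar : (star U : Matrix n n ℝ) = Uᵀ := by
    ext i j; simp [Matrix.star_eq_conjTranspose, Matrix.conjTranspose]
  have hUU : U * Uᵀ = 1 := by
    have := (Matrix.mem_unitaryGroup_iff).mp hA.eigenvectorUnitary.2
    rw [← hstar]; exact this
  refine ⟨Uᵀ *ᵥ x, ?_, ?_⟩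
  · conv_lhs => rw [hA.spectral_theorem, Unitary.conjStarAlgAut_apply, ← hU]
    rw [hstar, ← Matrix.mulVec_mulVec, ← Matrix.mulVec_mulVec,
      Matrix.dotProduct_mulVec, ← Matrix.mulVec_transpose]
    simp [dotProduct, Matrix.mulVec_diagonal, mul_comm, pow_two, mul_assoc, mul_left_comm]
  · have h1 : ∑ i, ((Uᵀ *ᵥ x) i)^2 = (Uᵀ *ᵥ x) ⬝ᵥ (Uᵀ *ᵥ x) := by
      simp [dotProduct, pow_two]
    rw [h1, Matrix.dotProduct_mulVec, Matrix.vecMul_transpose, Matrix.mulVec_mulVec, hUU,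
      Matrix.one_mulVec]

lemma ray_lower {n : Type*} [Fintype n] [DecidableEq n] [Nonempty n]
    (A : Matrix n n ℝ) (hA : A.IsHermitian) (x : n → ℝ) :
    (⨅ i, hA.eigenvalues i) * (x ⬝ᵥ x) ≤ x ⬝ᵥ (A *ᵥ x) := by
  obtain ⟨z, hz1, hz2⟩ := dot_spectral A hA x
  rw [hz1, hz2, Finset.mul_sum]
  refine Finset.sum_le_sum fun i _ => ?_
  have h1 : (⨅ i, hA.eigenvalues i) ≤ hA.eigenvalues i :=
    ciInf_le (Finite.bddBelow_range _) i
  nlinarith [sq_nonneg (z i)]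

lemma ray_upper {n : Type*} [Fintype n] [DecidableEq n] [Nonempty n]
    (A : Matrix n n ℝ) (hA : A.IsHermitian) (x : n → ℝ) :
    x ⬝ᵥ (A *ᵥ x) ≤ (⨆ i, hA.eigenvalues i) * (x ⬝ᵥ x) := by
  obtain ⟨z, hz1, hz2⟩ := dot_spectral A hA x
  rw [hz1, hz2, Finset.mul_sum]
  refine Finset.sum_le_sum fun i _ => ?_
  have h1 : hA.eigenvalues i ≤ ⨆ i, hA.eigenvalues i :=
    le_ciSup (Finite.bddAbove_range _) i
  nlinarith [sq_nonneg (z i)]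

lemma eig_lower {n : Type*} [Fintype n] [DecidableEq n]
    (M : Matrix n n ℝ) (hM : M.IsHermitian) (t : ℝ)
    (h : ∀ x : n → ℝ, t * (x ⬝ᵥ x) ≤ x ⬝ᵥ (M *ᵥ x)) (i : n) :
    t ≤ hM.eigenvalues i := by
  set v : n → ℝ := ⇑(hM.eigenvectorBasis i) with hv
  have hnorm : v ⬝ᵥ v = 1 := by
    have h1 : ‖hM.eigenvectorBasis i‖ = 1 := hM.eigenvectorBasis.orthonormal.1 i
    have h2 : (inner ℝ (hM.eigenvectorBasis i) (hM.eigenvectorBasis i) : ℝ) = 1 := by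
      rw [real_inner_self_eq_norm_sq, h1]; norm_num
    rw [← h2, PiLp.inner_apply]
    simp only [RCLike.inner_apply, starRingEnd_apply, star_trivial]
    rfl
  have hval : v ⬝ᵥ (M *ᵥ v) = hM.eigenvalues i := by
    rw [hM.mulVec_eigenvectorBasis, dotProduct_smul]
    exact (show hM.eigenvalues i * (v ⬝ᵥ v) = hM.eigenvalues i by rw [hnorm, mul_one])
  have := h v
  rw [hval, hnorm, mul_one] at this
  exact this

lemma dot_symm {n : Type*} [Fintype n] (A : Matrix n n ℝ) (h : Aᵀ = A) (a b : n → ℝ) :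
    a ⬝ᵥ (A *ᵥ b) = b ⬝ᵥ (A *ᵥ a) := by
  rw [Matrix.dotProduct_mulVec, ← Matrix.mulVec_transpose, h, dotProduct_comm]

lemma dot_cs {n : Type*} [Fintype n] (a b : n → ℝ) :
    (a ⬝ᵥ b)^2 ≤ (a ⬝ᵥ a) * (b ⬝ᵥ b) := by
  simpa [dotProduct, pow_two] using
    Finset.sum_mul_sq_le_sq_mul_sq Finset.univ a b

lemma psd_cs {n : Type*} [Fintype n] (A : Matrix n n ℝ) (hsym : Aᵀ = A)
    (hpos : ∀ z : n → ℝ, 0 ≤ z ⬝ᵥ (A *ᵥ z)) (a b : n → ℝ) :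
    (a ⬝ᵥ (A *ᵥ b))^2 ≤ (a ⬝ᵥ (A *ᵥ a)) * (b ⬝ᵥ (A *ᵥ b)) := by
  have key : ∀ s : ℝ, 0 ≤ (b ⬝ᵥ (A *ᵥ b)) * (s * s) + (2 * (a ⬝ᵥ (A *ᵥ b))) * s
      + (a ⬝ᵥ (A *ᵥ a)) := by
    intro s
    have h0 := hpos (a + s • b)
    have hba : b ⬝ᵥ (A *ᵥ a) = a ⬝ᵥ (A *ᵥ b) := dot_symm A hsym b a
    simp only [Matrix.mulVec_add, Matrix.mulVec_smul, add_dotProduct,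
      dotProduct_add, smul_dotProduct, dotProduct_smul,
      smul_eq_mul, hba] at h0
    nlinarith [h0]
  have hd := discrim_le_zero key
  rw [discrim] at hd
  nlinarith [hd]

lemma core_scalar (Kr φm φM rb t c1 d1 W WE X dxy σ : ℝ)
    (hφm : 0 < φm) (hφM : 0 < φM) (hrb : 0 < rb) (hKr : 0 < Kr)
    (ht : 0 < t) (ht1 : t ≤ rb*φm^2) (ht2 : t*φM ≤ Kr*φm)
    (hW0 : 0 ≤ W) (hWE0 : 0 ≤ WE) (hX0 : 0 ≤ X)
    (hφmW : φm*W ≤ WE) (hc1K : Kr ≤ φM*c1)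
    (hident : c1*dxy = σ^2 - d1^2 + c1*W)
    (hrayx : φm*X ≤ dxy) :
    t*X ≤ rb*WE + σ^2 := by
  have hc1_pos : 0 < c1 := by nlinarith
  have ht3 : t ≤ φm*c1 := by nlinarith
  have e1 : φm*c1*(t*X) ≤ t*c1*dxy := by nlinarith [mul_le_mul_of_nonneg_left hrayx (mul_nonneg ht.le hc1_pos.le)]
  have e2 : t*c1*dxy ≤ t*σ^2 + t*(c1*W) := by nlinarith [sq_nonneg d1, mul_le_mul_of_nonneg_left (le_of_eq hident) ht.le]
  have e3 : t*σ^2 ≤ φm*c1*σ^2 := mul_le_mul_of_nonneg_right ht3 (sq_nonneg σ)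
  have e4 : t*(c1*W) ≤ φm*c1*(rb*WE) := by
    have h5 : t*W ≤ rb*φm^2*W := mul_le_mul_of_nonneg_right ht1 hW0
    have h6 : rb*φm*(φm*W) ≤ rb*φm*WE :=
      mul_le_mul_of_nonneg_left hφmW (by positivity)
    nlinarith [mul_le_mul_of_nonneg_left h5 hc1_pos.le,
      mul_le_mul_of_nonneg_left h6 hc1_pos.le]
  have e5 : φm*c1*(t*X) ≤ φm*c1*(rb*WE + σ^2) := by nlinarith
  have hpc : 0 < φm*c1 := mul_pos hφm hc1_pos
  nlinarith [e5, hpc]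

lemma sum_weighted {K : ℕ} [NeZero K] (r : Fin K → ℝ) (rb : ℝ)
    (hrk : ∀ k, rb ≤ r k) (hrb0 : 0 ≤ rb) (y : Fin K → ℝ) (m : ℝ) :
    rb * (∑ k, (y k - (∑ j, y j)/K)^2) ≤ ∑ k, r k * (y k - m)^2 := by
  have hK : (0:ℝ) < K := by exact_mod_cast Nat.pos_of_ne_zero (NeZero.ne K)
  have expand : ∀ c : ℝ, ∑ k, (y k - c)^2
      = (∑ k, (y k)^2) - 2*c*(∑ k, y k) + (K:ℝ)*c^2 := by
    intro c
    have h1 : ∀ k : Fin K, (y k - c)^2 = (y k)^2 - 2*c*(y k) + c^2 := fun k => by ring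
    rw [Finset.sum_congr rfl fun k _ => h1 k]
    rw [Finset.sum_add_distrib, Finset.sum_sub_distrib, ← Finset.mul_sum,
      Finset.sum_const, Finset.card_univ, Fintype.card_fin, nsmul_eq_mul]
  have step1 : ∑ k, (y k - (∑ j, y j)/K)^2 ≤ ∑ k, (y k - m)^2 := by
    rw [expand, expand]
    set S1 := ∑ j, y j with hS1def
    set q := S1/(K:ℝ) with hq
    have hS1 : S1 = (K:ℝ)*q := by rw [hq]; field_simp
    rw [div_pow]
    have h4 : S1^2/(K:ℝ)^2 = q^2 := by rw [hq, div_pow]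
    rw [h4, hS1]
    nlinarith [sq_nonneg (m - q), hK]
  have step2 : rb * (∑ k, (y k - m)^2) ≤ ∑ k, r k * (y k - m)^2 := by
    rw [Finset.mul_sum]
    exact Finset.sum_le_sum fun k _ => mul_le_mul_of_nonneg_right (hrk k) (sq_nonneg _)
  calc rb * (∑ k, (y k - (∑ j, y j)/K)^2) ≤ rb * (∑ k, (y k - m)^2) :=
        mul_le_mul_of_nonneg_left step1 hrb0
    _ ≤ _ := step2

lemma expand_bilin {n : Type*} [Fintype n] (B : Matrix n n ℝ) (hBsym : Bᵀ = B)
    (a b : n → ℝ) (s : ℝ) :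
    (s • a + b) ⬝ᵥ (B *ᵥ (s • a + b))
      = s^2 * (a ⬝ᵥ (B *ᵥ a)) + 2*s*(a ⬝ᵥ (B *ᵥ b)) + b ⬝ᵥ (B *ᵥ b) := by
  have hba : b ⬝ᵥ (B *ᵥ a) = a ⬝ᵥ (B *ᵥ b) := dot_symm B hBsym b a
  simp only [Matrix.mulVec_add, Matrix.mulVec_smul, add_dotProduct,
    dotProduct_add, smul_dotProduct, dotProduct_smul,
    smul_eq_mul, hba]
  ring

lemma expand_lin {n : Type*} [Fintype n] (B : Matrix n n ℝ) (a b c : n → ℝ) (s : ℝ) :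
    c ⬝ᵥ (B *ᵥ (s • a + b)) = s * (c ⬝ᵥ (B *ᵥ a)) + c ⬝ᵥ (B *ᵥ b) := by
  simp only [Matrix.mulVec_add, Matrix.mulVec_smul, dotProduct_add,
    dotProduct_smul, smul_eq_mul]

set_option maxHeartbeats 2000000 in
lemma key_vec {K : ℕ} [NeZero K] (Sco : Matrix (Fin K) (Fin K) ℝ)
    (hSsym : Scoᵀ = Sco) (hdet : IsUnit Sco.det)
    (φm φM rb t : ℝ) (hφm : 0 < φm) (hφM : 0 < φM) (hrb : 0 < rb) (ht : 0 < t)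
    (hlow : ∀ z : Fin K → ℝ, φm * (z ⬝ᵥ z) ≤ z ⬝ᵥ (Sco *ᵥ z))
    (hup : ∀ z : Fin K → ℝ, z ⬝ᵥ (Sco *ᵥ z) ≤ φM * (z ⬝ᵥ z))
    (r : Fin K → ℝ) (hrk : ∀ k, rb ≤ r k)
    (ht1 : t ≤ rb*φm^2) (ht2 : t*φM ≤ (K:ℝ)*φm)
    (x : Fin K → ℝ) :
    t * (x ⬝ᵥ x) ≤ (∑ k, r k * ((Sco *ᵥ x) k - (r ⬝ᵥ (Sco *ᵥ x)))^2) + (∑ k, x k)^2 := by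
  haveI : Nonempty (Fin K) := ⟨⟨0, Nat.pos_of_ne_zero (NeZero.ne K)⟩⟩
  have hK : (0:ℝ) < K := by exact_mod_cast Nat.pos_of_ne_zero (NeZero.ne K)
  set B := Sco⁻¹ with hBdef
  have hSB : Sco * B = 1 := Matrix.mul_nonsing_inv _ hdet
  have hBS : B * Sco = 1 := Matrix.nonsing_inv_mul _ hdet
  have hBsym : Bᵀ = B := by rw [hBdef, Matrix.transpose_nonsing_inv, hSsym]
  set y := Sco *ᵥ x with hy
  have hBx : B *ᵥ y = x := by rw [hy, Matrix.mulVec_mulVec, hBS, Matrix.one_mulVec]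
  set one : Fin K → ℝ := fun _ => (1:ℝ) with hone_def
  set ybar := (∑ j, y j)/(K:ℝ) with hybar
  set w : Fin K → ℝ := fun k => y k - ybar with hwdef
  have hy_split : y = ybar • one + w := by
    funext k
    simp [hwdef, hone_def]
  -- quantities
  set c1 := one ⬝ᵥ (B *ᵥ one) with hc1def
  set d1 := one ⬝ᵥ (B *ᵥ w) with hd1def
  set W := w ⬝ᵥ (B *ᵥ w) with hWdef
  set WE := w ⬝ᵥ w with hWEdef
  set σ := ∑ k, x k with hσdef
  set dxy := y ⬝ᵥ (B *ᵥ y) with hdxydef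
  -- expansions
  have hdxy_expand : dxy = ybar^2*c1 + 2*ybar*d1 + W := by
    rw [hdxydef]
    nth_rewrite 1 [hy_split]
    nth_rewrite 1 [hy_split]
    exact expand_bilin B hBsym one w ybar
  have hσ1 : σ = one ⬝ᵥ x := by simp [hσdef, hone_def, dotProduct]
  have hσ_expand : σ = ybar*c1 + d1 := by
    rw [hσ1, ← hBx]
    nth_rewrite 1 [hy_split]
    exact expand_lin B one w one ybar
  have hident : c1 * dxy = σ^2 - d1^2 + c1*W := by
    rw [hdxy_expand, hσ_expand]; ring
  -- nonnegativity facts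
  have hWE0 : 0 ≤ WE := Finset.sum_nonneg fun k _ => mul_self_nonneg _
  have hxx0 : 0 ≤ x ⬝ᵥ x := Finset.sum_nonneg fun k _ => mul_self_nonneg _
  set u := B *ᵥ w with hudef
  have hSu : Sco *ᵥ u = w := by rw [hudef, Matrix.mulVec_mulVec, hSB, Matrix.one_mulVec]
  have huu0 : 0 ≤ u ⬝ᵥ u := Finset.sum_nonneg fun k _ => mul_self_nonneg _
  have hrayu : φm * (u ⬝ᵥ u) ≤ u ⬝ᵥ (Sco *ᵥ u) := hlow u
  have hWu : W = u ⬝ᵥ (Sco *ᵥ u) := by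
    rw [hWdef, hSu]; exact dotProduct_comm w u
  have hW0 : 0 ≤ W := by rw [hWu]; exact le_trans (mul_nonneg hφm.le huu0) hrayu
  have hCSw : W^2 ≤ WE * (u ⬝ᵥ u) := by rw [hWdef, hWEdef]; exact dot_cs w u
  have hφmW : φm * W ≤ WE := by
    rcases eq_or_lt_of_le hW0 with h0 | h0
    · rw [← h0, mul_zero]; exact hWE0
    · nlinarith [hrayu, hCSw, hWu]
  -- c1 lower bound
  have hpossco : ∀ z : Fin K → ℝ, 0 ≤ z ⬝ᵥ (Sco *ᵥ z) := fun z =>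
    le_trans (mul_nonneg hφm.le (Finset.sum_nonneg fun k _ => mul_self_nonneg _)) (hlow z)
  have hSBone : Sco *ᵥ (B *ᵥ one) = one := by
    rw [Matrix.mulVec_mulVec, hSB, Matrix.one_mulVec]
  have honeone : one ⬝ᵥ one = (K:ℝ) := by simp [hone_def, dotProduct]
  have hcs2 := psd_cs Sco hSsym hpossco one (B *ᵥ one)
  rw [hSBone, honeone] at hcs2
  have hBoneflip : (B *ᵥ one) ⬝ᵥ one = c1 := by
    rw [hc1def]; exact dotProduct_comm _ _
  rw [hBoneflip] at hcs2
  have hupone := hup one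
  rw [honeone] at hupone
  have hc10 : 0 ≤ c1 := by
    have h9 := hpossco (B *ᵥ one)
    rw [hSBone, hBoneflip] at h9
    exact h9
  have h9 := hpossco one
  clear_value u dxy σ WE W d1 c1 w ybar one y B
  have hc1K : (K:ℝ) ≤ φM * c1 := by nlinarith [hcs2, hupone, hK, hc10, h9, hφM]
  -- Rayleigh bound on x
  have hrayx : φm * (x ⬝ᵥ x) ≤ dxy := by
    have h1 : x ⬝ᵥ y = dxy := by
      rw [hdxydef, hBx]; exact dotProduct_comm x y
    rw [← h1, hy]
    exact hlow x
  -- core scalar inequality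
  have hcore : t * (x ⬝ᵥ x) ≤ rb*WE + σ^2 :=
    core_scalar (K:ℝ) φm φM rb t c1 d1 W WE (x ⬝ᵥ x) dxy σ
      hφm hφM hrb hK ht ht1 ht2 hW0 hWE0 hxx0 hφmW hc1K hident hrayx
  -- sum bound
  have hWEsum : WE = ∑ k, (y k - (∑ j, y j)/(K:ℝ))^2 := by
    rw [hWEdef]
    simp [hwdef, dotProduct, hybar, pow_two]
  have hsum := sum_weighted r rb hrk hrb.le y (r ⬝ᵥ y)
  rw [← hWEsum] at hsum
  linarith [hcore, hsum]


set_option maxHeartbeats 1000000 in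
theorem stmt16 {K : ℕ} [NeZero K]
    (Sco : Matrix (Fin K) (Fin K) ℝ) (hco : Sco.PosDef)
    (r : Fin K → ℝ) (hr : ∀ k, 0 < r k) (hrsum : ∑ k, r k = 1)
    (Aco : Matrix (Fin K) (Fin K) ℝ)
    (hAco : Aco = Matrix.diagonal (fun k => Real.sqrt (r k)) *
      ((1 : Matrix (Fin K) (Fin K) ℝ) - vecMulVec (fun _ => 1) r) * Sco)
    (Atilde : Matrix (Fin (K + 1)) (Fin K) ℝ)
    (hAt : Atilde = Matrix.of (Fin.snoc (fun i => Aco i) (fun _ => (1 : ℝ))))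
    (hM : (Atildeᵀ * Atilde).IsHermitian) :
    (⨅ i, hM.eigenvalues i)⁻¹ ≤
      2 * (⨅ k, r k)⁻¹ * (((⨅ i, hco.1.eigenvalues i))^2)⁻¹ +
        (K : ℝ)⁻¹ * (⨆ i, hco.1.eigenvalues i) / (⨅ i, hco.1.eigenvalues i) := by
  haveI : Nonempty (Fin K) := ⟨⟨0, Nat.pos_of_ne_zero (NeZero.ne K)⟩⟩
  set φm := ⨅ i, hco.1.eigenvalues i with hφm
  set φM := ⨆ i, hco.1.eigenvalues i with hφM
  set rb := ⨅ k, r k with hrbdef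
  have hφm_pos : 0 < φm := by
    obtain ⟨i, hi⟩ := exists_eq_ciInf_of_finite (f := fun i => hco.1.eigenvalues i)
    rw [hφm, ← hi]; exact hco.eigenvalues_pos i
  have hφMm : φm ≤ φM :=
    le_trans (ciInf_le (Finite.bddBelow_range _) (Classical.arbitrary _))
      (le_ciSup (Finite.bddAbove_range _) _)
  have hφM_pos : 0 < φM := lt_of_lt_of_le hφm_pos hφMm
  have hrb_pos : 0 < rb := by
    obtain ⟨k, hk⟩ := exists_eq_ciInf_of_finite (f := r)
    rw [hrbdef, ← hk]; exact hr k
  have hK : (0:ℝ) < K := by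
    exact_mod_cast Nat.pos_of_ne_zero (NeZero.ne K)
  set RHS := 2 * rb⁻¹ * ((φm^2))⁻¹ + (K:ℝ)⁻¹ * φM / φm with hRHSdef
  have hterm1 : 0 < 2 * rb⁻¹ * ((φm^2))⁻¹ :=
    mul_pos (mul_pos two_pos (inv_pos.mpr hrb_pos)) (inv_pos.mpr (pow_pos hφm_pos 2))
  have hterm2 : 0 < (K:ℝ)⁻¹ * φM / φm :=
    div_pos (mul_pos (inv_pos.mpr hK) hφM_pos) hφm_pos
  have hRHS_pos : 0 < RHS := by rw [hRHSdef]; linarith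
  set t := RHS⁻¹ with htdef
  have ht_pos : 0 < t := inv_pos.mpr hRHS_pos
  have ht1 : t ≤ rb * φm^2 := by
    have h1 : t ≤ (2 * rb⁻¹ * ((φm^2))⁻¹)⁻¹ := by
      apply inv_anti₀ hterm1
      rw [hRHSdef]; linarith
    have h2 : (2 * rb⁻¹ * ((φm^2))⁻¹)⁻¹ = rb * φm^2 / 2 := by
      field_simp
    rw [h2] at h1
    nlinarith [mul_pos hrb_pos (pow_pos hφm_pos 2)]
  have ht2 : t * φM ≤ (K:ℝ) * φm := by
    have h1 : t ≤ ((K:ℝ)⁻¹ * φM / φm)⁻¹ := by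
      apply inv_anti₀ hterm2
      rw [hRHSdef]; linarith
    have h2 : ((K:ℝ)⁻¹ * φM / φm)⁻¹ = (K:ℝ) * φm / φM := by
      field_simp
    rw [h2] at h1
    calc t * φM ≤ ((K:ℝ) * φm / φM) * φM := by
          apply mul_le_mul_of_nonneg_right h1 hφM_pos.le
      _ = (K:ℝ) * φm := by field_simp
  have hSsym : Scoᵀ = Sco := by
    ext i j
    have := congrFun (congrFun hco.1 i) j
    simpa [Matrix.conjTranspose_apply] using this
  have hdet : IsUnit Sco.det := isUnit_iff_ne_zero.mpr (ne_of_gt hco.det_pos)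
  have key : ∀ x : Fin K → ℝ, t * (x ⬝ᵥ x) ≤ x ⬝ᵥ ((Atildeᵀ * Atilde) *ᵥ x) := by
    intro x
    have step1 : x ⬝ᵥ ((Atildeᵀ * Atilde) *ᵥ x) = (Atilde *ᵥ x) ⬝ᵥ (Atilde *ᵥ x) := by
      rw [← Matrix.mulVec_mulVec, Matrix.dotProduct_mulVec, Matrix.vecMul_transpose]
    have step4 : ∀ k : Fin K, (Atilde *ᵥ x) (Fin.castSucc k) = (Aco *ᵥ x) k := by
      intro k
      rw [hAt]
      simp [Matrix.mulVec, Fin.snoc_castSucc]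
    have step5 : (Atilde *ᵥ x) (Fin.last K) = ∑ k, x k := by
      rw [hAt]
      simp [Matrix.mulVec, dotProduct, Fin.snoc_last]
    have step6 : ∀ k : Fin K, (Aco *ᵥ x) k
        = Real.sqrt (r k) * ((Sco *ᵥ x) k - r ⬝ᵥ (Sco *ᵥ x)) := by
      intro k
      have h1 : Aco *ᵥ x = (Matrix.diagonal fun k => Real.sqrt (r k)) *ᵥ
          ((1 - vecMulVec (fun _ => (1:ℝ)) r) *ᵥ (Sco *ᵥ x)) := by
        rw [hAco, Matrix.mulVec_mulVec, Matrix.mulVec_mulVec]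
      rw [h1, Matrix.mulVec_diagonal, Matrix.sub_mulVec, Matrix.one_mulVec, Pi.sub_apply]
      have h2 : (vecMulVec (fun _ => (1:ℝ)) r *ᵥ (Sco *ᵥ x)) k = r ⬝ᵥ (Sco *ᵥ x) := by
        simp [Matrix.mulVec, Matrix.vecMulVec_apply, dotProduct]
      rw [h2]
    have hQ : x ⬝ᵥ ((Atildeᵀ * Atilde) *ᵥ x)
        = (∑ k, r k * ((Sco *ᵥ x) k - r ⬝ᵥ (Sco *ᵥ x))^2) + (∑ k, x k)^2 := by
      rw [step1]
      have hexp : (Atilde *ᵥ x) ⬝ᵥ (Atilde *ᵥ x) = ∑ i : Fin (K+1), ((Atilde *ᵥ x) i)^2 := by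
        simp [dotProduct, pow_two]
      rw [hexp, Fin.sum_univ_castSucc, step5]
      congr 1
      refine Finset.sum_congr rfl fun k _ => ?_
      rw [step4, step6, mul_pow, Real.sq_sqrt (hr k).le]
    rw [hQ]
    exact key_vec Sco hSsym hdet φm φM rb t hφm_pos hφM_pos hrb_pos ht_pos
      (fun z => ray_lower Sco hco.1 z) (fun z => ray_upper Sco hco.1 z)
      r (fun k => ciInf_le (Finite.bddBelow_range _) k) ht1 ht2 x
  have heig : ∀ i, t ≤ hM.eigenvalues i := eig_lower _ hM t key
  have hinf : t ≤ ⨅ i, hM.eigenvalues i := le_ciInf heig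
  have hfin : (⨅ i, hM.eigenvalues i)⁻¹ ≤ t⁻¹ := inv_anti₀ ht_pos hinf
  rw [htdef, inv_inv] at hfin
  exact hfin
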